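/- Fix x₀ ≥ 0 and real-valued integrable functions v₁, v₂ on (x₀,∞) with ∫_{x₀}^∞ (|v₁| + |v₂|) < 1/4. Define Y as the space of real-valued absolutely continuous functions f on (x₀,∞) with f(x) → 0 as x → ∞ and norm ‖f‖_Y = ∫_{x₀}^∞ |f'(t)| dt. Then the operator (Tf)(x) = ∫ₓ^∞ (v₁(t) sin(2f(t)) + v₂(t) cos(2f(t))) dt maps Y to Y and satisfies ‖Tf₁ - Tf₂‖_Y ≤ (1/2)‖f₁ - f₂‖_Y. -/

import Mathlib

open MeasureTheory Set

/-- `f` belongs to the space `Y` of real absolutely continuous functions on `(x₀,∞)`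
vanishing at infinity, with (integrable) derivative `g`: `f(x) = -∫ₓ^∞ g(t) dt`. -/
def MemY (x₀ : ℝ) (f g : ℝ → ℝ) : Prop :=
  IntegrableOn g (Ioi x₀) ∧ ∀ x ∈ Ici x₀, f x = -∫ t in Ioi x, g t

lemma abs_sin_sub_sin_le (a b : ℝ) : |Real.sin a - Real.sin b| ≤ |a - b| := by
  rw [Real.sin_sub_sin, abs_mul, abs_mul]
  have h1 : |Real.sin ((a - b) / 2)| ≤ |(a - b) / 2| := Real.abs_sin_le_abs
  have h2 : |Real.cos ((a + b) / 2)| ≤ 1 := Real.abs_cos_le_one _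
  have h3 : |(a - b) / 2| = |a - b| / 2 := by rw [abs_div]; norm_num
  have h6 : |(2:ℝ)| = 2 := by norm_num
  have h7 := mul_le_mul h1 h2 (abs_nonneg _) (abs_nonneg _)
  rw [h6, h3] at *
  linarith

lemma abs_cos_sub_cos_le (a b : ℝ) : |Real.cos a - Real.cos b| ≤ |a - b| := by
  rw [Real.cos_sub_cos, abs_mul, abs_mul, abs_neg]
  have h1 : |Real.sin ((a - b) / 2)| ≤ |(a - b) / 2| := Real.abs_sin_le_abs
  have h2 : |Real.sin ((a + b) / 2)| ≤ 1 := Real.abs_sin_le_one _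
  have h3 : |(a - b) / 2| = |a - b| / 2 := by rw [abs_div]; norm_num
  have h6 : |(2:ℝ)| = 2 := by norm_num
  have h7 := mul_le_mul h2 h1 (abs_nonneg _) zero_le_one
  rw [h6, h3] at *
  nlinarith [abs_nonneg (Real.sin ((a + b) / 2)), abs_nonneg (Real.sin ((a - b) / 2))]

/-- A function in `Y` is a.e. strongly measurable on `(x₀,∞)`. -/
lemma MemY.aesm {x₀ : ℝ} {f g : ℝ → ℝ} (h : MemY x₀ f g) :
    AEStronglyMeasurable f (volume.restrict (Ioi x₀)) := by
  obtain ⟨hg, hf⟩ := h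
  set μ := volume.restrict (Ioi x₀)
  have hgi : Integrable g μ := hg
  have hP : Continuous fun b => ∫ x in x₀..b, g x ∂μ :=
    hgi.continuous_primitive x₀
  set G : ℝ → ℝ := fun x => (∫ x in x₀..x, g x ∂μ) - ∫ t, g t ∂μ with hG
  have hGc : Continuous G := hP.sub continuous_const
  refine (hGc.aestronglyMeasurable).congr ?_
  filter_upwards [ae_restrict_mem measurableSet_Ioi] with x hx
  have hx' : x₀ ≤ x := le_of_lt hx
  have h1 : (∫ x in x₀..x, g x ∂μ) = ∫ t in Ioc x₀ x, g t ∂μ :=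
    intervalIntegral.integral_of_le hx'
  have h2 : (∫ t in Ioc x₀ x, g t ∂μ) = ∫ t in Ioc x₀ x, g t := by
    rw [Measure.restrict_restrict measurableSet_Ioc,
      Set.inter_eq_self_of_subset_left Ioc_subset_Ioi_self]
  have h3 : (∫ t, g t ∂μ) = ∫ t in Ioi x₀, g t := rfl
  have hsplit : (∫ t in Ioi x₀, g t) = (∫ t in Ioc x₀ x, g t) + ∫ t in Ioi x, g t := by
    rw [← setIntegral_union (Ioc_disjoint_Ioi le_rfl) measurableSet_Ioi
      (hg.mono_set Ioc_subset_Ioi_self) (hg.mono_set (Ioi_subset_Ioi hx')),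
      Ioc_union_Ioi_eq_Ioi hx']
  have := hf x (le_of_lt hx : x₀ ≤ x)
  rw [this, hG]
  simp only [h1, h2, h3]
  linarith

theorem stmt_2 (x₀ : ℝ) (hx₀ : 0 ≤ x₀) (v₁ v₂ : ℝ → ℝ)
    (hv₁ : IntegrableOn v₁ (Ioi x₀)) (hv₂ : IntegrableOn v₂ (Ioi x₀))
    (hsmall : (∫ t in Ioi x₀, (|v₁ t| + |v₂ t|)) < 1/4) :
    (∀ f g : ℝ → ℝ, MemY x₀ f g →
      MemY x₀
        (fun x => ∫ t in Ioi x, (v₁ t * Real.sin (2 * f t) + v₂ t * Real.cos (2 * f t)))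
        (fun t => -(v₁ t * Real.sin (2 * f t) + v₂ t * Real.cos (2 * f t)))) ∧
    (∀ f₁ g₁ f₂ g₂ : ℝ → ℝ, MemY x₀ f₁ g₁ → MemY x₀ f₂ g₂ →
      (∫ t in Ioi x₀,
          |(-(v₁ t * Real.sin (2 * f₁ t) + v₂ t * Real.cos (2 * f₁ t))) -
            (-(v₁ t * Real.sin (2 * f₂ t) + v₂ t * Real.cos (2 * f₂ t)))|)
        ≤ (1/2) * ∫ t in Ioi x₀, |g₁ t - g₂ t|) := by
  have hbound : IntegrableOn (fun t => |v₁ t| + |v₂ t|) (Ioi x₀) := hv₁.abs.add hv₂.abs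
  -- `w f` is the integrand of `Tf`
  have hw_int : ∀ f g : ℝ → ℝ, MemY x₀ f g →
      IntegrableOn (fun t => v₁ t * Real.sin (2 * f t) + v₂ t * Real.cos (2 * f t))
        (Ioi x₀) := by
    intro f g hf
    have hfm := hf.aesm
    have hm : AEStronglyMeasurable
        (fun t => v₁ t * Real.sin (2 * f t) + v₂ t * Real.cos (2 * f t))
        (volume.restrict (Ioi x₀)) := by
      exact (hv₁.aestronglyMeasurable.mul
          ((Real.continuous_sin.comp (continuous_const.mul continuous_id)).comp_aestronglyMeasurable hfm)).add
        (hv₂.aestronglyMeasurable.mul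
          ((Real.continuous_cos.comp (continuous_const.mul continuous_id)).comp_aestronglyMeasurable hfm))
    refine hbound.mono' hm ?_
    filter_upwards with t
    have h1 : |Real.sin (2 * f t)| ≤ 1 := Real.abs_sin_le_one _
    have h2 : |Real.cos (2 * f t)| ≤ 1 := Real.abs_cos_le_one _
    calc ‖v₁ t * Real.sin (2 * f t) + v₂ t * Real.cos (2 * f t)‖
        ≤ |v₁ t * Real.sin (2 * f t)| + |v₂ t * Real.cos (2 * f t)| := abs_add_le _ _
      _ = |v₁ t| * |Real.sin (2 * f t)| + |v₂ t| * |Real.cos (2 * f t)| := by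
          rw [abs_mul, abs_mul]
      _ ≤ |v₁ t| + |v₂ t| := by
          have := mul_le_mul_of_nonneg_left h1 (abs_nonneg (v₁ t))
          have := mul_le_mul_of_nonneg_left h2 (abs_nonneg (v₂ t))
          linarith
  constructor
  · intro f g hf
    refine ⟨(hw_int f g hf).neg, fun x hx => ?_⟩
    rw [integral_neg, neg_neg]
  · intro f₁ g₁ f₂ g₂ hf₁ hf₂
    obtain ⟨hg₁, hF₁⟩ := hf₁
    obtain ⟨hg₂, hF₂⟩ := hf₂
    set C : ℝ := ∫ t in Ioi x₀, |g₁ t - g₂ t| with hC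
    have hgdiff : IntegrableOn (fun t => |g₁ t - g₂ t|) (Ioi x₀) := (hg₁.sub hg₂).abs
    have hC0 : 0 ≤ C := integral_nonneg fun t => abs_nonneg _
    -- pointwise bound on |f₁ - f₂|
    have hfdiff : ∀ t ∈ Ioi x₀, |f₁ t - f₂ t| ≤ C := by
      intro t ht
      have ht' : x₀ ≤ t := le_of_lt ht
      rw [hF₁ t ht', hF₂ t ht']
      have hsub : Ioi t ⊆ Ioi x₀ := Ioi_subset_Ioi ht'
      have h1 : (-∫ s in Ioi t, g₁ s) - -∫ s in Ioi t, g₂ s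
          = ∫ s in Ioi t, (g₂ s - g₁ s) := by
        rw [integral_sub (hg₂.mono_set hsub) (hg₁.mono_set hsub)]; ring
      rw [h1]
      calc |∫ s in Ioi t, (g₂ s - g₁ s)| ≤ ∫ s in Ioi t, |g₂ s - g₁ s| :=
            by simpa [Real.norm_eq_abs] using
              norm_integral_le_integral_norm (μ := volume.restrict (Ioi t)) fun s => g₂ s - g₁ s
        _ = ∫ s in Ioi t, |g₁ s - g₂ s| := by
            congr 1; ext s; rw [abs_sub_comm]
        _ ≤ C := by
            refine setIntegral_mono_set hgdiff ?_ (HasSubset.Subset.eventuallyLE hsub)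
            filter_upwards with s using abs_nonneg _
    -- main estimate
    have hkey : (∫ t in Ioi x₀,
          |(-(v₁ t * Real.sin (2 * f₁ t) + v₂ t * Real.cos (2 * f₁ t))) -
            (-(v₁ t * Real.sin (2 * f₂ t) + v₂ t * Real.cos (2 * f₂ t)))|)
        ≤ ∫ t in Ioi x₀, 2 * C * (|v₁ t| + |v₂ t|) := by
      refine integral_mono_of_nonneg ?_ ((hbound.const_mul (2 * C)) : _) ?_
      · filter_upwards with t using abs_nonneg _
      · filter_upwards [ae_restrict_mem measurableSet_Ioi] with t ht
        have hft := hfdiff t ht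
        have habs2 : |2 * f₁ t - 2 * f₂ t| = 2 * |f₁ t - f₂ t| := by
          rw [show 2 * f₁ t - 2 * f₂ t = 2 * (f₁ t - f₂ t) by ring, abs_mul, abs_two]
        have hs : |Real.sin (2 * f₁ t) - Real.sin (2 * f₂ t)| ≤ 2 * |f₁ t - f₂ t| :=
          habs2 ▸ abs_sin_sub_sin_le (2 * f₁ t) (2 * f₂ t)
        have hc : |Real.cos (2 * f₁ t) - Real.cos (2 * f₂ t)| ≤ 2 * |f₁ t - f₂ t| :=
          habs2 ▸ abs_cos_sub_cos_le (2 * f₁ t) (2 * f₂ t)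
        have e1 : (-(v₁ t * Real.sin (2 * f₁ t) + v₂ t * Real.cos (2 * f₁ t))) -
            (-(v₁ t * Real.sin (2 * f₂ t) + v₂ t * Real.cos (2 * f₂ t)))
            = v₁ t * (Real.sin (2 * f₂ t) - Real.sin (2 * f₁ t))
              + v₂ t * (Real.cos (2 * f₂ t) - Real.cos (2 * f₁ t)) := by ring
        rw [e1]
        calc |v₁ t * (Real.sin (2 * f₂ t) - Real.sin (2 * f₁ t))
              + v₂ t * (Real.cos (2 * f₂ t) - Real.cos (2 * f₁ t))|
            ≤ |v₁ t| * |Real.sin (2 * f₂ t) - Real.sin (2 * f₁ t)|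
              + |v₂ t| * |Real.cos (2 * f₂ t) - Real.cos (2 * f₁ t)| := by
              refine (abs_add_le _ _).trans ?_
              rw [abs_mul, abs_mul]
          _ ≤ |v₁ t| * (2 * C) + |v₂ t| * (2 * C) := by
              gcongr
              · exact (abs_sub_comm (Real.sin (2 * f₁ t)) _ ▸ hs).trans (by linarith)
              · exact (abs_sub_comm (Real.cos (2 * f₁ t)) _ ▸ hc).trans (by linarith)
          _ = 2 * C * (|v₁ t| + |v₂ t|) := by ring
    have hval : (∫ t in Ioi x₀, 2 * C * (|v₁ t| + |v₂ t|))
        = 2 * C * ∫ t in Ioi x₀, (|v₁ t| + |v₂ t|) := integral_const_mul _ _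
    refine hkey.trans ?_
    rw [hval]
    nlinarith [hsmall.le, integral_nonneg (μ := volume.restrict (Ioi x₀)) (f := fun t => |v₁ t| + |v₂ t|)
      (fun t => by positivity : ∀ t, (0:ℝ) ≤ |v₁ t| + |v₂ t|)]
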